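/- arXiv:1112.3262 — 3 statements merged into one kernel-verified Lean document; each statement's English description precedes it below -/
import Mathlib

section
/- If f ∈ C^{p+1}([a,b]) with f^{(k)}(a) = 0 for 0 ≤ k ≤ p, and 0 < α < 1, then ᶜD₊^α f ∈ C^p([a,b]) and (d^k/dt^k)(ᶜD₊^α f)(a) = 0 for 0 ≤ k ≤ p−1; moreover (d^k/dt^k)(ᶜD₊^α f) = I₊^{1−α} f^{(k+1)} for 1 ≤ k ≤ p. -/
open MeasureTheory intervalIntegral Set

/-- Left Riemann-Liouville fractional integral on `[a, ·]`. -/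
noncomputable def fracInt (a β : ℝ) (f : ℝ → ℝ) (t : ℝ) : ℝ :=
  (1 / Real.Gamma β) * ∫ τ in a..t, (t - τ) ^ (β - 1) * f τ

/-- Left Riemann-Liouville fractional derivative of order `α ∈ [0,1)`. -/
noncomputable def rlDeriv (a α : ℝ) (f : ℝ → ℝ) : ℝ → ℝ :=
  deriv (fracInt a (1 - α) f)

/-- Left Caputo fractional derivative of order `α ∈ [0,1)`. -/
noncomputable def caputoDeriv (a α : ℝ) (f : ℝ → ℝ) : ℝ → ℝ :=
  fracInt a (1 - α) (deriv f)

/-- Right Riemann-Liouville fractional integral on `[·, b]`. -/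
noncomputable def fracIntR (b β : ℝ) (f : ℝ → ℝ) (t : ℝ) : ℝ :=
  (1 / Real.Gamma β) * ∫ τ in t..b, (τ - t) ^ (β - 1) * f τ

/-- Right Riemann-Liouville fractional derivative of order `α ∈ [0,1)`. -/
noncomputable def rlDerivR (b α : ℝ) (f : ℝ → ℝ) (t : ℝ) : ℝ :=
  - deriv (fracIntR b (1 - α) f) t

/-- Right Caputo fractional derivative of order `α ∈ [0,1)`. -/
noncomputable def caputoDerivR (b α : ℝ) (f : ℝ → ℝ) (t : ℝ) : ℝ :=
  - fracIntR b (1 - α) (deriv f) t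


namespace CapAux

open Filter Topology

lemma kernel_ii {γ : ℝ} (hγ : 0 < γ) (t c d : ℝ) :
    IntervalIntegrable (fun τ => (t - τ) ^ (γ - 1) : ℝ → ℝ) volume c d := by
  have h1 : IntervalIntegrable (fun x : ℝ => x ^ (γ - 1)) volume (t - c) (t - d) :=
    intervalIntegrable_rpow' (by linarith)
  have h2 := h1.comp_sub_left t
  simpa using h2

lemma kernel_mul_ii {γ : ℝ} (hγ : 0 < γ) {h : ℝ → ℝ} (hh : Continuous h) (t c d : ℝ) :
    IntervalIntegrable (fun τ => (t - τ) ^ (γ - 1) * h τ : ℝ → ℝ) volume c d :=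
  (kernel_ii hγ t c d).mul_continuousOn hh.continuousOn

lemma kernel_int {γ : ℝ} (hγ : 0 < γ) (σ t : ℝ) :
    ∫ u in σ..t, (u - σ) ^ (γ - 1) = (t - σ) ^ γ / γ := by
  rw [intervalIntegral.integral_comp_sub_right (fun x => x ^ (γ - 1)) σ, sub_self,
    integral_rpow (Or.inl (by linarith))]
  rw [sub_add_cancel, Real.zero_rpow (by linarith), sub_zero]

lemma kernel_int' {γ : ℝ} (hγ : 0 < γ) (a u : ℝ) :
    ∫ σ in a..u, (u - σ) ^ (γ - 1) = (u - a) ^ γ / γ := by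
  rw [intervalIntegral.integral_comp_sub_left (fun x => x ^ (γ - 1)) u, sub_self,
    integral_rpow (Or.inl (by linarith))]
  rw [sub_add_cancel, Real.zero_rpow (by linarith), sub_zero]

lemma J_fubini {γ : ℝ} (hγ0 : 0 < γ) (hγ1 : γ < 1) {h : ℝ → ℝ} (hh : Continuous h)
    {a t : ℝ} (ht : a ≤ t) :
    ∫ u in a..t, (∫ σ in a..u, (u - σ) ^ (γ - 1) * h σ)
      = ∫ σ in a..t, ((t - σ) ^ γ / γ) * h σ := by
  obtain ⟨M, hM0, hM⟩ : ∃ M, 0 ≤ M ∧ ∀ x ∈ Icc a t, |h x| ≤ M := by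
    obtain ⟨M, hM⟩ := (isCompact_Icc (a := a) (b := t)).exists_bound_of_continuousOn
      hh.continuousOn
    exact ⟨max M 0, le_max_right _ _,
      fun x hx => le_trans (by simpa using hM x hx) (le_max_left _ _)⟩
  set G : ℝ → ℝ → ℝ :=
    fun u σ => (Ioc a u).indicator (fun σ => (u - σ) ^ (γ - 1) * h σ) σ with hG
  set μ : Measure ℝ := volume.restrict (Ioc a t) with hμ
  have hGmeas : MeasureTheory.StronglyMeasurable (Function.uncurry G) := by
    have heq : Function.uncurry G = fun p : ℝ × ℝ =>
        ({q : ℝ × ℝ | a < q.2 ∧ q.2 ≤ q.1}).indicator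
          (fun q => (q.1 - q.2) ^ (γ - 1) * h q.2) p := by
      funext p
      rcases p with ⟨u, σ⟩
      by_cases hσ : σ ∈ Ioc a u
      · rw [Function.uncurry]
        simp only [hG, indicator_of_mem hσ]
        rw [indicator_of_mem (by exact ⟨hσ.1, hσ.2⟩)]
      · rw [Function.uncurry]
        simp only [hG, indicator_of_notMem hσ]
        rw [indicator_of_notMem (by exact fun hc => hσ ⟨hc.1, hc.2⟩)]
    rw [heq]
    apply Measurable.stronglyMeasurable
    apply Measurable.indicator
    · have h1 : Measurable fun x : ℝ => x ^ (γ - 1) := by measurability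
      exact (h1.comp (measurable_fst.sub measurable_snd)).mul
        (hh.measurable.comp measurable_snd)
    · exact (measurableSet_lt measurable_const measurable_snd).inter
        (measurableSet_le measurable_snd measurable_fst)
  have hsec : ∀ u, a ≤ u → Integrable (G u) volume := by
    intro u hu
    simp only [hG]
    rw [integrable_indicator_iff measurableSet_Ioc]
    have h2 := kernel_mul_ii hγ0 hh u a u
    rwa [intervalIntegrable_iff, uIoc_of_le hu] at h2
  have hInt : Integrable (Function.uncurry G) (μ.prod volume) := by
    rw [integrable_prod_iff hGmeas.aestronglyMeasurable]
    constructor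
    · rw [hμ, ae_restrict_iff' measurableSet_Ioc]
      exact ae_of_all _ fun u hu => hsec u hu.1.le
    · apply Integrable.mono' (integrable_const (M * ((t - a) ^ γ / γ)))
      · exact hGmeas.norm.integral_prod_right'.aestronglyMeasurable
      · rw [hμ, ae_restrict_iff' measurableSet_Ioc]
        apply ae_of_all
        intro u hu
        have h1 : (fun σ => ‖G u σ‖)
            = (Ioc a u).indicator (fun σ => ‖(u - σ) ^ (γ - 1) * h σ‖) := by
          funext σ
          by_cases hσ : σ ∈ Ioc a u
          · simp only [hG, indicator_of_mem hσ]
          · simp only [hG, indicator_of_notMem hσ, norm_zero]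
        rw [Real.norm_eq_abs,
          abs_of_nonneg (integral_nonneg (fun σ => norm_nonneg _))]
        have h2 : (∫ σ, ‖Function.uncurry G (u, σ)‖)
            = ∫ σ in Ioc a u, ‖(u - σ) ^ (γ - 1) * h σ‖ := by
          show (∫ σ, ‖G u σ‖) = _
          rw [h1, MeasureTheory.integral_indicator measurableSet_Ioc]
        rw [h2]
        have hiOn1 : IntegrableOn (fun σ => ‖(u - σ) ^ (γ - 1) * h σ‖) (Ioc a u) := by
          have := (kernel_mul_ii hγ0 hh u a u).norm
          rwa [intervalIntegrable_iff, uIoc_of_le hu.1.le] at this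
        have hiOn2 : IntegrableOn (fun σ => (u - σ) ^ (γ - 1) * M) (Ioc a u) := by
          have := (kernel_ii hγ0 u a u).mul_const M
          rwa [intervalIntegrable_iff, uIoc_of_le hu.1.le] at this
        calc ∫ σ in Ioc a u, ‖(u - σ) ^ (γ - 1) * h σ‖
            ≤ ∫ σ in Ioc a u, (u - σ) ^ (γ - 1) * M := by
              apply setIntegral_mono_on hiOn1 hiOn2 measurableSet_Ioc
              intro σ hσ
              rw [norm_mul, Real.norm_eq_abs, Real.norm_eq_abs,
                abs_of_nonneg (Real.rpow_nonneg (by linarith [hσ.2] : (0:ℝ) ≤ u - σ) _)]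
              exact mul_le_mul_of_nonneg_left
                (hM σ ⟨hσ.1.le, le_trans hσ.2 hu.2⟩)
                (Real.rpow_nonneg (by linarith [hσ.2]) _)
          _ = ((u - a) ^ γ / γ) * M := by
              rw [← intervalIntegral.integral_of_le hu.1.le,
                intervalIntegral.integral_mul_const, kernel_int' hγ0]
          _ ≤ M * ((t - a) ^ γ / γ) := by
              rw [mul_comm]
              exact mul_le_mul_of_nonneg_left
                (div_le_div_of_nonneg_right
                  (Real.rpow_le_rpow (by linarith [hu.1.le]) (by linarith [hu.2]) hγ0.le)
                  hγ0.le) hM0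
  have hswap : (∫ u, ∫ σ, G u σ ∂volume ∂μ) = ∫ σ, ∫ u, G u σ ∂μ ∂volume :=
    MeasureTheory.integral_integral_swap hInt
  have hlhs : (∫ u in a..t, (∫ σ in a..u, (u - σ) ^ (γ - 1) * h σ))
      = ∫ u, ∫ σ, G u σ ∂volume ∂μ := by
    rw [intervalIntegral.integral_of_le ht, hμ]
    apply MeasureTheory.setIntegral_congr_fun measurableSet_Ioc
    intro u hu
    show (∫ σ in a..u, (u - σ) ^ (γ - 1) * h σ) = ∫ σ, G u σ
    rw [intervalIntegral.integral_of_le hu.1.le,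
      ← MeasureTheory.integral_indicator measurableSet_Ioc]
  have hrhs : (∫ σ, ∫ u, G u σ ∂μ ∂volume)
      = ∫ σ in a..t, ((t - σ) ^ γ / γ) * h σ := by
    have hptw : ∀ σ, (∫ u, G u σ ∂μ)
        = (Ioc a t).indicator (fun σ => ((t - σ) ^ γ / γ) * h σ) σ := by
      intro σ
      by_cases hσ : σ ∈ Ioc a t
      · rw [indicator_of_mem hσ]
        have hfun : (fun u => G u σ)
            = (Ioi σ).indicator (fun u => (u - σ) ^ (γ - 1) * h σ) := by
          funext u
          by_cases hu : σ ∈ Ioc a u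
          · rcases eq_or_lt_of_le hu.2 with rfl | hlt
            · rw [hG]
              simp only [indicator_of_mem hu]
              rw [indicator_of_notMem (by simp), sub_self,
                Real.zero_rpow (by linarith), zero_mul]
            · rw [hG]
              simp only [indicator_of_mem hu]
              rw [indicator_of_mem (show u ∈ Ioi σ from hlt)]
          · rw [hG]
            simp only [indicator_of_notMem hu]
            rw [indicator_of_notMem (a := u) (s := Ioi σ)
              (fun hc => hu ⟨hσ.1, le_of_lt hc⟩)]
        rw [hfun, hμ, MeasureTheory.integral_indicator measurableSet_Ioi,
          Measure.restrict_restrict measurableSet_Ioi]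
        have hset : Ioi σ ∩ Ioc a t = Ioc σ t := by
          ext u
          constructor
          · rintro ⟨h1, _, h3⟩; exact ⟨h1, h3⟩
          · rintro ⟨h1, h2⟩; exact ⟨h1, lt_trans hσ.1 h1, h2⟩
        rw [hset, ← intervalIntegral.integral_of_le hσ.2,
          intervalIntegral.integral_mul_const, kernel_int hγ0]
      · rw [indicator_of_notMem hσ, hμ]
        have : ∀ u ∈ Ioc a t, G u σ = 0 := by
          intro u hu
          apply indicator_of_notMem
          intro hc
          rcases not_and_or.1 hσ with h1 | h1
          · exact h1 hc.1
          · exact h1 (le_trans hc.2 hu.2)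
        rw [show (∫ u, G u σ ∂volume.restrict (Ioc a t))
            = ∫ u in Ioc a t, G u σ from rfl]
        rw [MeasureTheory.setIntegral_congr_fun measurableSet_Ioc this]
        simp
    simp_rw [hptw]
    rw [MeasureTheory.integral_indicator measurableSet_Ioc,
      intervalIntegral.integral_of_le ht]
  rw [hlhs, hswap, hrhs]

lemma J_repr {γ : ℝ} (h : ℝ → ℝ) (a t : ℝ) (ht : a ≤ t) :
    ∫ τ in a..t, (t - τ) ^ (γ - 1) * h τ
      = ∫ s, (Ioc (0:ℝ) (t - a)).indicator (fun s => s ^ (γ - 1) * h (t - s)) s := by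
  have h1 : (∫ τ in a..t, (t - τ) ^ (γ - 1) * h τ)
      = ∫ s in (t - t)..(t - a), s ^ (γ - 1) * h (t - s) := by
    rw [← intervalIntegral.integral_comp_sub_left (fun s => s ^ (γ - 1) * h (t - s)) t]
    simp
  rw [h1, sub_self, intervalIntegral.integral_of_le (by linarith),
    ← MeasureTheory.integral_indicator measurableSet_Ioc]

lemma J_contOn {γ : ℝ} (hγ : 0 < γ) {h : ℝ → ℝ} (hh : Continuous h) (a : ℝ) :
    ContinuousOn (fun t => ∫ τ in a..t, (t - τ) ^ (γ - 1) * h τ) (Ici a) := by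
  intro t₀ ht₀
  have ht₀' : a ≤ t₀ := ht₀
  obtain ⟨M, hM⟩ : ∃ M, ∀ x ∈ Icc a (t₀ + 1), |h x| ≤ M := by
    obtain ⟨M, hM⟩ := (isCompact_Icc (a := a) (b := t₀ + 1)).exists_bound_of_continuousOn
      hh.continuousOn
    exact ⟨M, fun x hx => by simpa using hM x hx⟩
  have hM0 : 0 ≤ M := le_trans (abs_nonneg _) (hM a ⟨le_refl a, by linarith⟩)
  set F : ℝ → ℝ → ℝ :=
    fun t s => (Ioc (0:ℝ) (t - a)).indicator (fun s => s ^ (γ - 1) * h (t - s)) s with hF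
  set bound : ℝ → ℝ :=
    fun s => (Ioc (0:ℝ) (t₀ + 1 - a)).indicator (fun s => s ^ (γ - 1) * M) s with hb
  have hbnn : ∀ s, 0 ≤ bound s := fun s =>
    indicator_nonneg (fun s hs' => mul_nonneg (Real.rpow_nonneg hs'.1.le _) hM0) s
  have hl : 𝓝[Ici a] t₀ = 𝓝[Icc a (t₀ + 1)] t₀ := by
    rw [← Ici_inter_Iic]
    exact nhdsWithin_restrict' _ (Iic_mem_nhds (by linarith))
  have key : Tendsto (fun t => ∫ s, F t s) (𝓝[Icc a (t₀ + 1)] t₀) (𝓝 (∫ s, F t₀ s)) := by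
    apply MeasureTheory.tendsto_integral_filter_of_dominated_convergence bound
    · apply Filter.Eventually.of_forall
      intro t
      have : Measurable fun s : ℝ => s ^ (γ - 1) * h (t - s) := by
        have h1 : Measurable fun s : ℝ => s ^ (γ - 1) := by measurability
        exact h1.mul (hh.measurable.comp (measurable_const.sub measurable_id))
      exact (this.indicator measurableSet_Ioc).aestronglyMeasurable
    · filter_upwards [self_mem_nhdsWithin] with t ht
      apply Filter.Eventually.of_forall
      intro s
      by_cases hs : s ∈ Ioc (0:ℝ) (t - a)
      · have h1 : s ∈ Ioc (0:ℝ) (t₀ + 1 - a) := ⟨hs.1, le_trans hs.2 (by linarith [ht.2])⟩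
        simp only [hF, hb, indicator_of_mem hs, indicator_of_mem h1]
        rw [Real.norm_eq_abs, abs_mul, abs_of_nonneg (Real.rpow_nonneg hs.1.le _)]
        have : |h (t - s)| ≤ M := hM _ ⟨by linarith [hs.2], by linarith [hs.1, ht.2]⟩
        exact mul_le_mul_of_nonneg_left this (Real.rpow_nonneg hs.1.le _)
      · simp only [hF, indicator_of_notMem hs, norm_zero]
        exact hbnn s
    · have h2 : IntegrableOn (fun s : ℝ => s ^ (γ - 1)) (Ioc 0 (t₀ + 1 - a)) := by
        have h3 := intervalIntegrable_rpow' (a := 0) (b := t₀ + 1 - a) (r := γ - 1)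
          (by linarith)
        rw [intervalIntegrable_iff] at h3
        apply h3.mono_set
        rcases le_or_gt 0 (t₀ + 1 - a) with hc | hc
        · rw [uIoc_of_le hc]
        · rw [Ioc_eq_empty (by linarith)]; exact empty_subset _
      rw [hb, integrable_indicator_iff measurableSet_Ioc]
      exact h2.mul_const M
    · have h0 : ∀ᵐ s : ℝ, s ≠ t₀ - a := by
        refine ae_iff.2 ?_
        simpa using measure_singleton (t₀ - a)
      filter_upwards [h0] with s hs
      rcases le_or_gt s 0 with hs0 | hs0
      · have hz : ∀ t : ℝ, F t s = 0 := fun t =>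
          indicator_of_notMem (fun hmem => absurd hmem.1 (not_lt.2 hs0)) _
        simp only [hz]
        exact tendsto_const_nhds
      rcases hs.lt_or_gt with hlt | hgt
      · -- s < t₀ - a
        have hev : ∀ᶠ t in 𝓝 t₀, F t s = s ^ (γ - 1) * h (t - s) := by
          filter_upwards [eventually_gt_nhds (show s + a < t₀ by linarith)] with t htt
          exact indicator_of_mem (show s ∈ Ioc (0:ℝ) (t - a) from ⟨hs0, by linarith⟩) _
        have hlim : Tendsto (fun t => s ^ (γ - 1) * h (t - s)) (𝓝 t₀)
            (𝓝 (s ^ (γ - 1) * h (t₀ - s))) := by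
          apply Tendsto.const_mul
          exact (hh.tendsto _).comp (tendsto_id.sub_const s)
        have hFt₀ : F t₀ s = s ^ (γ - 1) * h (t₀ - s) :=
          indicator_of_mem (show s ∈ Ioc (0:ℝ) (t₀ - a) from ⟨hs0, by linarith⟩) _
        rw [hFt₀]
        exact ((hlim.congr' (by filter_upwards [hev] with t ht; rw [ht]))).mono_left
          nhdsWithin_le_nhds
      · -- s > t₀ - a
        have hev : ∀ᶠ t in 𝓝 t₀, F t s = 0 := by
          filter_upwards [eventually_lt_nhds (show t₀ < s + a by linarith)] with t htt
          exact indicator_of_notMem (fun hmem => absurd hmem.2 (by push_neg; linarith)) _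
        have hFt₀ : F t₀ s = 0 :=
          indicator_of_notMem (fun hmem => absurd hmem.2 (by push_neg; linarith)) _
        rw [hFt₀]
        exact (tendsto_const_nhds.congr' (by filter_upwards [hev] with t ht; rw [ht])).mono_left
          nhdsWithin_le_nhds
  have heq : ∀ᶠ t in 𝓝[Icc a (t₀ + 1)] t₀,
      (∫ s, F t s) = ∫ τ in a..t, (t - τ) ^ (γ - 1) * h τ := by
    filter_upwards [self_mem_nhdsWithin] with t ht
    rw [J_repr h a t ht.1]
  unfold ContinuousWithinAt
  rw [hl]
  have key2 := key.congr' heq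
  have : (∫ s, F t₀ s) = ∫ τ in a..t₀, (t₀ - τ) ^ (γ - 1) * h τ := (J_repr h a t₀ ht₀').symm
  rw [this] at key2
  exact key2

/-- Integration by parts : `∫ (t-τ)^(γ-1) g = ∫ ((t-σ)^γ/γ) g'` when `g a = 0`. -/
lemma J_parts {γ : ℝ} (hγ0 : 0 < γ) (hγ1 : γ < 1) {g : ℝ → ℝ} (hg : ContDiff ℝ 1 g)
    {a t : ℝ} (hga : g a = 0) (ht : a ≤ t) :
    ∫ τ in a..t, (t - τ) ^ (γ - 1) * g τ = ∫ σ in a..t, ((t - σ) ^ γ / γ) * deriv g σ := by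
  rcases eq_or_lt_of_le ht with rfl | hlt
  · simp
  have hgc : Continuous g := hg.continuous
  have hg'c : Continuous (deriv g) := (hg.iterate_deriv' 0 1).continuous
  set W : ℝ → ℝ := fun τ => (-((t - τ) ^ γ / γ)) * g τ with hW
  have hWc : ContinuousOn W (Icc a t) := by
    apply Continuous.continuousOn
    exact (((Real.continuous_rpow_const hγ0.le).comp (continuous_const.sub continuous_id)).div_const
      γ).neg.mul hgc
  have hWd : ∀ τ ∈ Ioo a t, HasDerivAt W
      ((t - τ) ^ (γ - 1) * g τ + (-((t - τ) ^ γ / γ)) * deriv g τ) τ := by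
    intro τ hτ
    have h1 : HasDerivAt (fun τ : ℝ => t - τ) (-1) τ := by
      simpa using (hasDerivAt_id τ).const_sub t
    have h2 : HasDerivAt (fun τ : ℝ => (t - τ) ^ γ) (-1 * γ * (t - τ) ^ (γ - 1)) τ :=
      h1.rpow_const (Or.inl (by simp only [ne_eq, sub_eq_zero]; exact hτ.2.ne'))
    have h3 : HasDerivAt (fun τ : ℝ => -((t - τ) ^ γ / γ)) ((t - τ) ^ (γ - 1)) τ := by
      have := (h2.div_const γ).neg
      have e : -(-1 * γ * (t - τ) ^ (γ - 1) / γ) = (t - τ) ^ (γ - 1) := by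
        rw [mul_comm (-1 : ℝ) γ, mul_assoc, mul_div_cancel_left₀ _ hγ0.ne']; ring
      rw [e] at this
      exact this
    have h4 : HasDerivAt g (deriv g τ) τ :=
      (hg.differentiable one_ne_zero).differentiableAt.hasDerivAt
    exact h3.mul h4
  have hc0 : Continuous fun σ : ℝ => (t - σ) ^ γ :=
    (Real.continuous_rpow_const hγ0.le).comp (continuous_const.sub continuous_id)
  have hc1 : Continuous fun σ : ℝ => (-((t - σ) ^ γ / γ)) * deriv g σ :=
    (hc0.div_const γ).neg.mul hg'c
  have hint : IntervalIntegrable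
      (fun τ => (t - τ) ^ (γ - 1) * g τ + (-((t - τ) ^ γ / γ)) * deriv g τ) volume a t :=
    (kernel_mul_ii hγ0 hgc t a t).add (hc1.intervalIntegrable a t)
  have hftc := intervalIntegral.integral_eq_sub_of_hasDerivAt_of_le ht hWc hWd hint
  have hWt : W t = 0 := by simp [hW, Real.zero_rpow (by linarith : γ ≠ 0)]
  have hWa : W a = 0 := by simp [hW, hga]
  rw [hWt, hWa, sub_zero] at hftc
  have h5 : ∫ τ in a..t, ((t - τ) ^ (γ - 1) * g τ + (-((t - τ) ^ γ / γ)) * deriv g τ)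
      = (∫ τ in a..t, (t - τ) ^ (γ - 1) * g τ)
        + ∫ τ in a..t, (-((t - τ) ^ γ / γ)) * deriv g τ :=
    intervalIntegral.integral_add (kernel_mul_ii hγ0 hgc t a t) (hc1.intervalIntegrable a t)
  rw [h5] at hftc
  have h6 : ∫ σ in a..t, (-((t - σ) ^ γ / γ)) * deriv g σ
      = -∫ σ in a..t, ((t - σ) ^ γ / γ) * deriv g σ := by
    rw [← intervalIntegral.integral_neg]
    congr 1; funext σ; ring
  rw [h6] at hftc
  linarith

lemma J_hasDeriv {γ : ℝ} (hγ0 : 0 < γ) (hγ1 : γ < 1) {g : ℝ → ℝ} (hg : ContDiff ℝ 1 g)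
    {a b : ℝ} (hab : a < b) (hga : g a = 0) {t : ℝ} (ht : t ∈ Icc a b) :
    HasDerivWithinAt (fun u => ∫ τ in a..u, (u - τ) ^ (γ - 1) * g τ)
      (∫ τ in a..t, (t - τ) ^ (γ - 1) * deriv g τ) (Icc a b) t := by
  have hg'c : Continuous (deriv g) := (hg.iterate_deriv' 0 1).continuous
  set K : ℝ → ℝ := fun u => ∫ τ in a..u, (u - τ) ^ (γ - 1) * deriv g τ with hK
  have hKc : ContinuousOn K (Ici a) := J_contOn hγ0 hg'c a
  have hKii : IntervalIntegrable K volume a t := by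
    apply ContinuousOn.intervalIntegrable
    apply hKc.mono
    rw [uIcc_of_le ht.1]
    exact fun x hx => hx.1
  have heqOn : ∀ u ∈ Icc a b,
      (∫ x in a..u, K x) = ∫ τ in a..u, (u - τ) ^ (γ - 1) * g τ := by
    intro u hu
    have h1 : (∫ x in a..u, K x) = ∫ σ in a..u, ((u - σ) ^ γ / γ) * deriv g σ := by
      simp only [hK]
      exact J_fubini hγ0 hγ1 hg'c hu.1
    rw [h1, ← J_parts hγ0 hγ1 hg hga hu.1]
  have hmain : HasDerivWithinAt (fun u => ∫ x in a..u, K x) (K t) (Icc a b) t := by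
    haveI : Fact (t ∈ Icc a b) := ⟨ht⟩
    have hmeas : StronglyMeasurableAtFilter K (𝓝[Icc a b] t) :=
      ⟨Icc a b, self_mem_nhdsWithin,
        (hKc.mono Icc_subset_Ici_self).aestronglyMeasurable measurableSet_Icc⟩
    have hcw : ContinuousWithinAt K (Icc a b) t :=
      (hKc t ht.1).mono Icc_subset_Ici_self
    exact intervalIntegral.integral_hasDerivWithinAt_right hKii hmeas hcw
  exact hmain.congr (fun u hu => (heqOn u hu).symm) (heqOn t ht).symm

lemma chain_contDiffOn {n : ℕ} {a b : ℝ} (hab : a < b) (D : ℕ → ℝ → ℝ)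
    (hd : ∀ k, k < n → ∀ t ∈ Icc a b, HasDerivWithinAt (D k) (D (k + 1) t) (Icc a b) t)
    (hc : ContinuousOn (D n) (Icc a b)) :
    ∀ m k : ℕ, k + m ≤ n → ContDiffOn ℝ m (D k) (Icc a b) := by
  intro m
  induction m with
  | zero =>
    intro k hk
    rw [Nat.cast_zero, contDiffOn_zero]
    rcases eq_or_lt_of_le hk with rfl | hlt
    · simpa using hc
    · exact fun t htc => ((hd k (by omega) t htc).differentiableWithinAt).continuousWithinAt
  | succ m ih =>
    intro k hk
    have hcast : ((m + 1 : ℕ) : WithTop ℕ∞) = (m : WithTop ℕ∞) + 1 := by push_cast; ring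
    rw [hcast, contDiffOn_succ_iff_derivWithin (uniqueDiffOn_Icc hab)]
    refine ⟨fun t htc => (hd k (by omega) t htc).differentiableWithinAt, ?_, ?_⟩
    · intro hω; exact absurd hω (by simp)
    · apply (ih (k + 1) (by omega)).congr
      intro x hx
      exact ((hd k (by omega) x hx).derivWithin (uniqueDiffOn_Icc hab x hx))

lemma chain_iteratedDerivWithin {n : ℕ} {a b : ℝ} (hab : a < b) (D : ℕ → ℝ → ℝ)
    (hd : ∀ k, k < n → ∀ t ∈ Icc a b, HasDerivWithinAt (D k) (D (k + 1) t) (Icc a b) t) :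
    ∀ k ≤ n, ∀ t ∈ Icc a b, iteratedDerivWithin k (D 0) (Icc a b) t = D k t := by
  intro k
  induction k with
  | zero => intro _ t _; simp
  | succ k ih =>
    intro hk t htc
    rw [iteratedDerivWithin_succ]
    rw [derivWithin_congr (fun x hx => ih (by omega) x hx) (ih (by omega) t htc)]
    exact ((hd k (by omega) t htc).derivWithin (uniqueDiffOn_Icc hab t htc))

end CapAux

open CapAux Filter Topology

/-- for `f ∈ C^{p+1}₊([a,b])` and `0 < α < 1`, `ᶜD₊^α f ∈ C^p₊([a,b])`
and `(d^k/dt^k)(ᶜD₊^α f) = I₊^{1-α} f^{(k+1)}` for `1 ≤ k ≤ p`. -/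
theorem caputo_deriv_regularity (a b α : ℝ) (p : ℕ) (hab : a < b)
    (hα0 : 0 < α) (hα1 : α < 1) (f : ℝ → ℝ)
    (hf : ContDiff ℝ (p + 1) f)
    (hf0 : ∀ k ≤ p, iteratedDeriv k f a = 0) :
    ContDiffOn ℝ p (caputoDeriv a α f) (Set.Icc a b) ∧
    (∀ k ≤ p - 1, iteratedDerivWithin k (caputoDeriv a α f) (Set.Icc a b) a = 0) ∧
    (∀ k, 1 ≤ k → k ≤ p → ∀ t ∈ Set.Icc a b,
      iteratedDerivWithin k (caputoDeriv a α f) (Set.Icc a b) t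
        = fracInt a (1 - α) (iteratedDeriv (k + 1) f) t) := by
  set γ : ℝ := 1 - α with hγ
  have hγ0 : 0 < γ := by simp only [hγ]; linarith
  have hγ1 : γ < 1 := by simp only [hγ]; linarith
  set D : ℕ → ℝ → ℝ := fun k => fracInt a γ (iteratedDeriv (k + 1) f) with hD
  have hDeq : caputoDeriv a α f = D 0 := by
    simp only [hD, caputoDeriv, hγ]
    rw [show (0 + 1 : ℕ) = 1 from rfl, iteratedDeriv_one]
  have hgC1 : ∀ k : ℕ, k + 1 ≤ p → ContDiff ℝ 1 (iteratedDeriv (k + 1) f) := by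
    intro k hk
    rw [iteratedDeriv_eq_iterate]
    apply ContDiff.iterate_deriv' 1 (k + 1)
    apply hf.of_le
    have h1 : ((1 + (k + 1) : ℕ) : WithTop ℕ∞) ≤ ((p + 1 : ℕ) : WithTop ℕ∞) := by
      exact_mod_cast (by omega : 1 + (k + 1) ≤ p + 1)
    simpa using h1
  have hgCont : ∀ k : ℕ, k ≤ p → Continuous (iteratedDeriv (k + 1) f) := by
    intro k hk
    rw [iteratedDeriv_eq_iterate]
    apply ContDiff.continuous (𝕜 := ℝ) (n := 0)
    apply ContDiff.iterate_deriv' 0 (k + 1)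
    apply hf.of_le
    have h1 : ((0 + (k + 1) : ℕ) : WithTop ℕ∞) ≤ ((p + 1 : ℕ) : WithTop ℕ∞) := by
      exact_mod_cast (by omega : 0 + (k + 1) ≤ p + 1)
    simpa using h1
  have hd : ∀ k, k < p → ∀ t ∈ Set.Icc a b,
      HasDerivWithinAt (D k) (D (k + 1) t) (Set.Icc a b) t := by
    intro k hk t ht
    have h1 := J_hasDeriv hγ0 hγ1 (hgC1 k (by omega)) hab
      (hf0 (k + 1) (by omega)) ht
    have h2 : deriv (iteratedDeriv (k + 1) f) = iteratedDeriv (k + 1 + 1) f :=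
      (iteratedDeriv_succ).symm
    rw [h2] at h1
    have h3 := h1.const_mul (1 / Real.Gamma γ)
    exact h3
  have hc : ContinuousOn (D p) (Set.Icc a b) := by
    have h1 := J_contOn hγ0 (hgCont p le_rfl) a
    have h2 : ContinuousOn
        (fun t => ∫ τ in a..t, (t - τ) ^ (γ - 1) * iteratedDeriv (p + 1) f τ)
        (Set.Icc a b) := h1.mono (fun x hx => hx.1)
    have h3 := h2.const_smul (1 / Real.Gamma γ)
    exact h3
  have hsmooth := chain_contDiffOn hab D hd hc p 0 (by omega)
  have hiter := chain_iteratedDerivWithin hab D hd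
  refine ⟨?_, ?_, ?_⟩
  · rw [hDeq]; exact hsmooth
  · intro k hk
    rw [hDeq, hiter k (by omega) a ⟨le_rfl, hab.le⟩]
    simp [hD, fracInt]
  · intro k hk1 hkp t ht
    rw [hDeq, hiter k (by omega) t ht]
end

section
/- Multidimensional half-derivative composition (div-grad lemma): let Ω ⊂ ℝ^d be bounded and convex, γ ∈ ℝ^d a constant vector, and u : cl(Ω) → ℝ such that along every line parallel to a coordinate axis the restriction of u is AC². Then for every x ∈ Ω, div^{1/2}(γ × ᶜ∇^{1/2} u)(x) = γ · ∇u(x), where × is the componentwise product. -/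
open MeasureTheory intervalIntegral Set

lemma measurable_rpow_c (c : ℝ) : Measurable (fun x : ℝ => x ^ c) :=
  measurable_of_continuousOn_compl_singleton 0 (fun x hx =>
    (Real.continuousAt_rpow_const x c (Or.inl hx)).continuousWithinAt)

lemma kernel_measurable (s t : ℝ) :
    Measurable (fun τ : ℝ => (t - τ) ^ (-(1/2) : ℝ) * (τ - s) ^ (-(1/2) : ℝ)) :=
  ((measurable_rpow_c _).comp (measurable_const.sub measurable_id)).mul
    ((measurable_rpow_c _).comp (measurable_id.sub measurable_const))

lemma kernel_intervalIntegrable (s t : ℝ) (hst : s < t) :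
    IntervalIntegrable (fun τ : ℝ => (t - τ) ^ (-(1/2) : ℝ) * (τ - s) ^ (-(1/2) : ℝ))
      volume s t := by
  set e : ℝ := (-(1/2) : ℝ) with he
  have hc : (0:ℝ) < (t - s)/2 := by linarith
  set m : ℝ := (s + t)/2 with hm
  have hsm : s < m := by simp only [hm]; linarith
  have hmt : m < t := by simp only [hm]; linarith
  have h0 : IntervalIntegrable (fun x : ℝ => x ^ e) volume 0 (m - s) :=
    intervalIntegral.intervalIntegrable_rpow' (by norm_num)
  have I1 : IntervalIntegrable (fun τ : ℝ => (τ - s) ^ e) volume s m := by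
    simpa using h0.comp_sub_right s
  have h0' : IntervalIntegrable (fun x : ℝ => x ^ e) volume 0 (t - m) :=
    intervalIntegral.intervalIntegrable_rpow' (by norm_num)
  have I2 : IntervalIntegrable (fun τ : ℝ => (t - τ) ^ e) volume m t := by
    have := (h0'.comp_sub_left t).symm
    simpa using this
  have hC : (0:ℝ) ≤ ((t - s)/2) ^ e := Real.rpow_nonneg hc.le _
  have part1 : IntervalIntegrable
      (fun τ : ℝ => (t - τ) ^ e * (τ - s) ^ e) volume s m := by
    refine IntervalIntegrable.mono_fun (I1.const_mul (((t - s)/2) ^ e))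
      ((kernel_measurable s t).aestronglyMeasurable) ?_
    rw [Filter.EventuallyLE, ae_restrict_iff' measurableSet_uIoc]
    filter_upwards with τ hτ
    rw [uIoc_of_le hsm.le] at hτ
    have h1 : (0:ℝ) < τ - s := by linarith [hτ.1]
    have h2 : (0:ℝ) < (t - s)/2 := hc
    have h3 : (t - s)/2 ≤ t - τ := by
      have := hτ.2; simp only [hm] at this; linarith
    have hb : (t - τ) ^ e ≤ ((t - s)/2) ^ e :=
      Real.rpow_le_rpow_of_nonpos h2 h3 (by norm_num [he])
    have hn1 : (0:ℝ) ≤ (t - τ) ^ e := Real.rpow_nonneg (by linarith) _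
    have hn2 : (0:ℝ) ≤ (τ - s) ^ e := Real.rpow_nonneg h1.le _
    simp only [Real.norm_eq_abs, abs_of_nonneg (mul_nonneg hn1 hn2),
      abs_of_nonneg (mul_nonneg hC hn2)]
    exact mul_le_mul_of_nonneg_right hb hn2
  have part2 : IntervalIntegrable
      (fun τ : ℝ => (t - τ) ^ e * (τ - s) ^ e) volume m t := by
    refine IntervalIntegrable.mono_fun (I2.mul_const (((t - s)/2) ^ e))
      ((kernel_measurable s t).aestronglyMeasurable) ?_
    rw [Filter.EventuallyLE, ae_restrict_iff' measurableSet_uIoc]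
    filter_upwards with τ hτ
    rw [uIoc_of_le hmt.le] at hτ
    have h1 : (0:ℝ) ≤ t - τ := by linarith [hτ.2]
    have h3 : (t - s)/2 ≤ τ - s := by
      have := hτ.1; simp only [hm] at this; linarith
    have hb : (τ - s) ^ e ≤ ((t - s)/2) ^ e :=
      Real.rpow_le_rpow_of_nonpos hc h3 (by norm_num [he])
    have hn1 : (0:ℝ) ≤ (t - τ) ^ e := Real.rpow_nonneg h1 _
    have hn2 : (0:ℝ) ≤ (τ - s) ^ e := Real.rpow_nonneg (by linarith) _
    simp only [Real.norm_eq_abs, abs_of_nonneg (mul_nonneg hn1 hn2),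
      abs_of_nonneg (mul_nonneg hn1 hC)]
    exact mul_le_mul_of_nonneg_left hb hn1
  exact part1.trans part2

lemma beta_integral (s t : ℝ) (hst : s < t) :
    ∫ τ in s..t, (t - τ) ^ (-(1/2) : ℝ) * (τ - s) ^ (-(1/2) : ℝ) = Real.pi := by
  have hc : (0:ℝ) < t - s := by linarith
  set φ : ℝ → ℝ := fun τ => Real.arcsin ((2*τ - s - t)/(t - s)) with hφ
  have hcont : Continuous φ := by
    apply Real.continuous_arcsin.comp
    fun_prop
  have hd : ∀ τ ∈ Ioo s t,
      HasDerivAt φ ((t - τ) ^ (-(1/2) : ℝ) * (τ - s) ^ (-(1/2) : ℝ)) τ := by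
    intro τ hτ
    have h1 : (0:ℝ) < t - τ := by linarith [hτ.2]
    have h2 : (0:ℝ) < τ - s := by linarith [hτ.1]
    set z : ℝ := (2*τ - s - t)/(t - s) with hz
    have hz1 : -1 < z := by
      rw [hz, lt_div_iff₀ hc]; linarith
    have hz2 : z < 1 := by
      rw [hz, div_lt_iff₀ hc]; linarith
    have haff : HasDerivAt (fun τ : ℝ => (2*τ - s - t)/(t - s)) (2/(t - s)) τ := by
      have := ((((hasDerivAt_id τ).const_mul (2:ℝ)).sub_const s).sub_const t).div_const (t - s)
      simpa using this
    have harc := (Real.hasDerivAt_arcsin (ne_of_gt hz1) (ne_of_lt hz2)).comp τ haff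
    have hsq : 1 - z^2 = 4*(t - τ)*(τ - s)/(t - s)^2 := by
      rw [hz]; field_simp; ring
    have hsqrt : Real.sqrt (1 - z^2) = 2*Real.sqrt (t - τ)*Real.sqrt (τ - s)/(t - s) := by
      have hsq2 : (2*Real.sqrt (t - τ)*Real.sqrt (τ - s)/(t - s))^2
          = 4*(t - τ)*(τ - s)/(t - s)^2 := by
        rw [div_pow, mul_pow, mul_pow, Real.sq_sqrt h1.le, Real.sq_sqrt h2.le]; ring
      rw [hsq, ← hsq2, Real.sqrt_sq (by positivity)]
    have hval : 1 / Real.sqrt (1 - z^2) * (2/(t - s))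
        = (t - τ) ^ (-(1/2) : ℝ) * (τ - s) ^ (-(1/2) : ℝ) := by
      rw [hsqrt, Real.rpow_neg h1.le, Real.rpow_neg h2.le,
        ← Real.sqrt_eq_rpow, ← Real.sqrt_eq_rpow]
      have p1 : (0:ℝ) < Real.sqrt (t - τ) := Real.sqrt_pos.2 h1
      have p2 : (0:ℝ) < Real.sqrt (τ - s) := Real.sqrt_pos.2 h2
      field_simp
    rw [← hval]
    exact harc
  rw [intervalIntegral.integral_eq_sub_of_hasDerivAt_of_le hst.le
    hcont.continuousOn hd (kernel_intervalIntegrable s t hst)]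
  have e1 : (2*t - s - t)/(t - s) = 1 := by field_simp; ring
  have e2 : (2*s - s - t)/(t - s) = -1 := by
    rw [div_eq_iff hc.ne']; ring
  rw [hφ]
  simp only [e1, e2, Real.arcsin_one, Real.arcsin_neg_one]
  ring

lemma semigroup_half (a t : ℝ) (hat : a < t) (g : ℝ → ℝ) (hg : Continuous g) :
    ∫ τ in a..t, (t - τ) ^ (-(1/2) : ℝ) *
        ∫ s in a..τ, (τ - s) ^ (-(1/2) : ℝ) * g s
      = Real.pi * ∫ s in a..t, g s := by
  set e : ℝ := (-(1/2) : ℝ) with he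
  set S : Set (ℝ × ℝ) := {p | a < p.1 ∧ p.1 < p.2 ∧ p.2 < t} with hS
  have hSm : MeasurableSet S := by
    apply MeasurableSet.inter
    · exact measurableSet_lt measurable_const measurable_fst
    apply MeasurableSet.inter
    · exact measurableSet_lt measurable_fst measurable_snd
    · exact measurableSet_lt measurable_snd measurable_const
  set F : ℝ × ℝ → ℝ := fun p => (t - p.2) ^ e * (p.2 - p.1) ^ e * g p.1 with hF
  have hFm : Measurable F := by
    exact (((measurable_rpow_c e).comp (measurable_const.sub measurable_snd)).mul
      ((measurable_rpow_c e).comp (measurable_snd.sub measurable_fst))).mul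
      (hg.measurable.comp measurable_fst)
  set H : ℝ → ℝ → ℝ := fun s τ => S.indicator F (s, τ) with hH
  have hHm : Measurable (Function.uncurry H) := by
    have : Function.uncurry H = S.indicator F := rfl
    rw [this]
    exact hFm.indicator hSm
  -- sections
  have hsec : ∀ s ∈ Ioo a t, (fun τ => H s τ)
      = (Ioo s t).indicator (fun τ => (t - τ) ^ e * (τ - s) ^ e * g s) := by
    intro s hs
    funext τ
    show S.indicator F (s, τ) = _
    by_cases hτ : τ ∈ Ioo s t
    · rw [indicator_of_mem hτ]
      have hm : (s, τ) ∈ S := ⟨hs.1, hτ.1, hτ.2⟩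
      rw [indicator_of_mem hm]
    · rw [indicator_of_notMem hτ]
      have hm : (s, τ) ∉ S := by
        intro hmem
        exact hτ ⟨hmem.2.1, hmem.2.2⟩
      rw [indicator_of_notMem hm]
  have hsec0 : ∀ s, s ∉ Ioo a t → (fun τ => H s τ) = fun _ => (0:ℝ) := by
    intro s hs
    funext τ
    show S.indicator F (s, τ) = _
    apply indicator_of_notMem
    intro hmem
    exact hs ⟨hmem.1, lt_trans hmem.2.1 hmem.2.2⟩
  -- integrability of sections
  have hsecInt : ∀ s ∈ Ioo a t, Integrable (fun τ => H s τ) volume := by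
    intro s hs
    rw [hsec s hs]
    rw [integrable_indicator_iff measurableSet_Ioo]
    have : IntervalIntegrable (fun τ => (t - τ) ^ e * (τ - s) ^ e * g s) volume s t :=
      (kernel_intervalIntegrable s t hs.2).mul_const (g s)
    have := (intervalIntegrable_iff_integrableOn_Ioo_of_le hs.2.le).1 this
    exact this
  -- kernel integral over Ioo
  have hker : ∀ s ∈ Ioo a t, ∫ τ in Ioo s t, (t - τ) ^ e * (τ - s) ^ e = Real.pi := by
    intro s hs
    rw [← integral_Ioc_eq_integral_Ioo, ← intervalIntegral.integral_of_le hs.2.le]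
    exact beta_integral s t hs.2
  -- kernel nonneg on Ioo
  have hker_nonneg : ∀ s, ∀ τ ∈ Ioo s t, 0 ≤ (t - τ) ^ e * (τ - s) ^ e := by
    intro s τ hτ
    exact mul_nonneg (Real.rpow_nonneg (by linarith [hτ.2]) _)
      (Real.rpow_nonneg (by linarith [hτ.1]) _)
  -- section integrals
  have hsecval : ∀ s ∈ Ioo a t, ∫ τ, H s τ = Real.pi * g s := by
    intro s hs
    rw [hsec s hs, MeasureTheory.integral_indicator measurableSet_Ioo]
    rw [MeasureTheory.integral_mul_const, hker s hs, mul_comm]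
  have hsecnorm : ∀ s ∈ Ioo a t, ∫ τ, ‖H s τ‖ = Real.pi * |g s| := by
    intro s hs
    have hp : ∀ τ, H s τ = (Ioo s t).indicator
        (fun τ => (t - τ) ^ e * (τ - s) ^ e * g s) τ := congrFun (hsec s hs)
    simp only [hp]
    have hni : (fun τ => ‖(Ioo s t).indicator (fun τ => (t - τ) ^ e * (τ - s) ^ e * g s) τ‖)
        = (Ioo s t).indicator (fun τ => ‖(t - τ) ^ e * (τ - s) ^ e * g s‖) := by
      funext τ; exact norm_indicator_eq_indicator_norm _ τ
    rw [show (∫ τ, ‖(Ioo s t).indicator (fun τ => (t - τ) ^ e * (τ - s) ^ e * g s) τ‖) =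
      ∫ τ, (Ioo s t).indicator (fun τ => ‖(t - τ) ^ e * (τ - s) ^ e * g s‖) τ from by rw [← hni],
      MeasureTheory.integral_indicator measurableSet_Ioo]
    have heq : ∀ τ ∈ Ioo s t, ‖(t - τ) ^ e * (τ - s) ^ e * g s‖
        = (t - τ) ^ e * (τ - s) ^ e * |g s| := by
      intro τ hτ
      rw [Real.norm_eq_abs, abs_mul, abs_of_nonneg (hker_nonneg s τ hτ)]
    rw [setIntegral_congr_fun measurableSet_Ioo heq]
    rw [MeasureTheory.integral_mul_const, hker s hs, mul_comm]
  -- integrability of uncurry H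
  have hHint : Integrable (Function.uncurry H) (volume.prod volume) := by
    rw [integrable_prod_iff hHm.aestronglyMeasurable]
    constructor
    · filter_upwards with s
      by_cases hs : s ∈ Ioo a t
      · exact hsecInt s hs
      · rw [show (fun τ => Function.uncurry H (s, τ)) = fun τ => H s τ from rfl, hsec0 s hs]
        exact integrable_zero _ _ _
    · have : (fun s => ∫ τ, ‖Function.uncurry H (s, τ)‖)
          = (Ioo a t).indicator (fun s => Real.pi * |g s|) := by
        funext s
        by_cases hs : s ∈ Ioo a t
        · rw [indicator_of_mem hs]
          exact hsecnorm s hs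
        · rw [indicator_of_notMem hs]
          have hp : ∀ τ, H s τ = 0 := congrFun (hsec0 s hs)
          simp only [Function.uncurry]
          simp [hp]
      rw [this, integrable_indicator_iff measurableSet_Ioo]
      exact ((continuous_const.mul hg.abs).integrableOn_Icc (a := a) (b := t)).mono_set
        Ioo_subset_Icc_self
  -- swap
  have hswap := integral_integral_swap (f := H) hHint
  -- LHS of swap
  have hL : ∫ s, ∫ τ, H s τ = Real.pi * ∫ s in a..t, g s := by
    have : (fun s => ∫ τ, H s τ) = (Ioo a t).indicator (fun s => Real.pi * g s) := by
      funext s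
      by_cases hs : s ∈ Ioo a t
      · rw [indicator_of_mem hs]; exact hsecval s hs
      · rw [indicator_of_notMem hs, hsec0 s hs]; simp
    rw [this, MeasureTheory.integral_indicator measurableSet_Ioo, MeasureTheory.integral_const_mul,
      ← integral_Ioc_eq_integral_Ioo, ← intervalIntegral.integral_of_le hat.le]
  -- RHS of swap: sections in τ
  have hsecτ : ∀ τ ∈ Ioo a t, (fun s => H s τ)
      = (Ioo a τ).indicator (fun s => (t - τ) ^ e * (τ - s) ^ e * g s) := by
    intro τ hτ
    funext s
    show S.indicator F (s, τ) = _
    by_cases hs : s ∈ Ioo a τ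
    · rw [indicator_of_mem hs]
      have hm : (s, τ) ∈ S := ⟨hs.1, hs.2, hτ.2⟩
      rw [indicator_of_mem hm]
    · rw [indicator_of_notMem hs]
      have hm : (s, τ) ∉ S := fun hmem => hs ⟨hmem.1, hmem.2.1⟩
      rw [indicator_of_notMem hm]
  have hsecτ0 : ∀ τ, τ ∉ Ioo a t → (fun s => H s τ) = fun _ => (0:ℝ) := by
    intro τ hτ
    funext s
    show S.indicator F (s, τ) = _
    apply indicator_of_notMem
    intro hmem
    exact hτ ⟨lt_trans hmem.1 hmem.2.1, hmem.2.2⟩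
  have hR : ∫ τ, ∫ s, H s τ
      = ∫ τ in a..t, (t - τ) ^ e * ∫ s in a..τ, (τ - s) ^ e * g s := by
    have : (fun τ => ∫ s, H s τ)
        = (Ioo a t).indicator (fun τ => (t - τ) ^ e * ∫ s in a..τ, (τ - s) ^ e * g s) := by
      funext τ
      by_cases hτ : τ ∈ Ioo a t
      · rw [indicator_of_mem hτ, hsecτ τ hτ, MeasureTheory.integral_indicator measurableSet_Ioo]
        have : ∀ s, (t - τ) ^ e * (τ - s) ^ e * g s = (t - τ) ^ e * ((τ - s) ^ e * g s) := by
          intro s; ring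
        simp_rw [this]
        rw [MeasureTheory.integral_const_mul, ← integral_Ioc_eq_integral_Ioo,
          ← intervalIntegral.integral_of_le hτ.1.le]
      · rw [indicator_of_notMem hτ, hsecτ0 τ hτ]; simp
    rw [this, MeasureTheory.integral_indicator measurableSet_Ioo, ← integral_Ioc_eq_integral_Ioo,
      ← intervalIntegral.integral_of_le hat.le]
  rw [← hR, ← hswap, hL]

lemma onedim (a b : ℝ) (f g h : ℝ → ℝ) (c x0 : ℝ)
    (hx0 : x0 ∈ Ioo a b)
    (hf : ∀ t ∈ Icc a b, HasDerivAt f (g t) t)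
    (hh : IntervalIntegrable h volume a b)
    (hgh : ∀ t ∈ Icc a b, g t = g a + ∫ s in a..t, h s) :
    rlDeriv a (1/2) (fun t => c * caputoDeriv a (1/2) f t) x0 = c * deriv f x0 := by
  have hab : a < b := lt_trans hx0.1 hx0.2
  -- continuity of g on Icc a b
  have hprim : ContinuousOn (fun t => g a + ∫ s in a..t, h s) (Icc a b) := by
    apply continuousOn_const.add
    have : IntegrableOn h (uIcc a b) volume := by
      rw [uIcc_of_le hab.le, integrableOn_Icc_iff_integrableOn_Ioc]
      exact (intervalIntegrable_iff_integrableOn_Ioc_of_le hab.le).1 hh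
    simpa [uIcc_of_le hab.le] using intervalIntegral.continuousOn_primitive_interval this
  have hgc : ContinuousOn g (Icc a b) := hprim.congr hgh
  -- clamped version
  set g₁ : ℝ → ℝ := fun s => g (max a (min s b)) with hg₁
  have hclamp : ∀ s, max a (min s b) ∈ Icc a b := by
    intro s
    constructor
    · exact le_max_left _ _
    · exact max_le hab.le (min_le_right _ _)
  have hg₁c : Continuous g₁ := by
    apply hgc.comp_continuous
    · exact continuous_const.max (continuous_id.min continuous_const)
    · exact hclamp
  have hg₁eq : ∀ s ∈ Icc a b, g₁ s = g s := by
    intro s hs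
    simp only [hg₁, min_eq_left hs.2, max_eq_right hs.1]
  have hderiv_eq : ∀ s ∈ Icc a b, deriv f s = g s := fun s hs => (hf s hs).deriv
  -- key identity on Ioo a b
  have key : ∀ t' ∈ Ioo a b,
      fracInt a (1 - 1/2) (fun t => c * caputoDeriv a (1/2) f t) t'
        = c * ∫ s in a..t', g₁ s := by
    intro t' ht'
    have hat' : a < t' := ht'.1
    rw [fracInt]
    have hGhalf : Real.Gamma (1 - 1/2) = Real.sqrt Real.pi := by
      norm_num [Real.Gamma_one_half_eq]
    have step1 : (∫ τ in a..t', (t' - τ) ^ ((1 - 1/2 : ℝ) - 1) *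
        (c * caputoDeriv a (1/2) f τ))
        = (c * (1 / Real.sqrt Real.pi)) *
          ∫ τ in a..t', (t' - τ) ^ (-(1/2) : ℝ) * ∫ s in a..τ, (τ - s) ^ (-(1/2) : ℝ) * g₁ s := by
      rw [← intervalIntegral.integral_const_mul]
      apply intervalIntegral.integral_congr
      intro τ hτ
      rw [uIcc_of_le hat'.le] at hτ
      have hinner : caputoDeriv a (1/2) f τ
          = (1 / Real.sqrt Real.pi) * ∫ s in a..τ, (τ - s) ^ (-(1/2) : ℝ) * g₁ s := by
        rw [caputoDeriv, fracInt, hGhalf]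
        congr 1
        apply intervalIntegral.integral_congr
        intro s hs
        rw [uIcc_of_le hτ.1] at hs
        have hsb : s ∈ Icc a b := ⟨hs.1, le_trans hs.2 (le_trans hτ.2 ht'.2.le)⟩
        show (τ - s) ^ ((1 - 1/2 : ℝ) - 1) * deriv f s = (τ - s) ^ (-(1/2) : ℝ) * g₁ s
        rw [hderiv_eq s hsb, ← hg₁eq s hsb]
        norm_num
      show (t' - τ) ^ ((1 - 1/2 : ℝ) - 1) * (c * caputoDeriv a (1/2) f τ)
        = c * (1 / Real.sqrt Real.pi) *
          ((t' - τ) ^ (-(1/2) : ℝ) * ∫ s in a..τ, (τ - s) ^ (-(1/2) : ℝ) * g₁ s)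
      rw [hinner]
      norm_num
      ring
    rw [step1, semigroup_half a t' hat' g₁ hg₁c, hGhalf]
    have hπ : Real.sqrt Real.pi * Real.sqrt Real.pi = Real.pi :=
      Real.mul_self_sqrt Real.pi_nonneg
    have hπ0 : Real.sqrt Real.pi ≠ 0 :=
      ne_of_gt (Real.sqrt_pos.2 Real.pi_pos)
    field_simp
    rw [Real.sq_sqrt Real.pi_nonneg]; ring
  -- eventual equality near x0
  have hnhds : Ioo a b ∈ nhds x0 := Ioo_mem_nhds hx0.1 hx0.2
  have hev : fracInt a (1 - 1/2) (fun t => c * caputoDeriv a (1/2) f t)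
      =ᶠ[nhds x0] fun t' => c * ∫ s in a..t', g₁ s := by
    filter_upwards [hnhds] with t' ht'
    exact key t' ht'
  have hprimderiv : HasDerivAt (fun t' => c * ∫ s in a..t', g₁ s) (c * g₁ x0) x0 := by
    apply HasDerivAt.const_mul
    exact intervalIntegral.integral_hasDerivAt_right
      (hg₁c.intervalIntegrable a x0)
      hg₁c.stronglyMeasurable.stronglyMeasurableAtFilter
      hg₁c.continuousAt
  rw [rlDeriv, hev.deriv_eq, hprimderiv.deriv]
  have hx0' : x0 ∈ Icc a b := ⟨hx0.1.le, hx0.2.le⟩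
  rw [hg₁eq x0 hx0', ← hderiv_eq x0 hx0']

/-- div-grad lemma. For `Ω ⊂ ℝ^d` bounded convex, a constant
vector `γ` and `u` which is `AC²` along every coordinate line of `Ω`
(with segment `Ω_{i,x} = [A i x, B i x]`), for every `x ∈ Ω`:
`div^{1/2}(γ × ᶜ∇^{1/2} u)(x) = γ · ∇u(x)`. -/
theorem div_half_grad_half (d : ℕ) (Ω : Set (Fin d → ℝ))
    (hΩo : IsOpen Ω) (hΩb : Bornology.IsBounded Ω) (hΩc : Convex ℝ Ω)
    (γ : Fin d → ℝ) (A B : Fin d → (Fin d → ℝ) → ℝ)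
    (hAB : ∀ i, ∀ x ∈ closure Ω,
      {t : ℝ | Function.update x i t ∈ closure Ω} = Set.Icc (A i x) (B i x))
    (u : (Fin d → ℝ) → ℝ) (u' u'' : Fin d → (Fin d → ℝ) → ℝ → ℝ)
    (hu1 : ∀ i, ∀ x ∈ closure Ω, ∀ t ∈ Set.Icc (A i x) (B i x),
      HasDerivAt (fun s => u (Function.update x i s)) (u' i x t) t)
    (hu2 : ∀ i, ∀ x ∈ closure Ω,
      IntervalIntegrable (u'' i x) volume (A i x) (B i x) ∧
      ∀ t ∈ Set.Icc (A i x) (B i x),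
        u' i x t = u' i x (A i x) + ∫ s in (A i x)..t, u'' i x s) :
    ∀ x ∈ Ω,
      (∑ i, rlDeriv (A i x) (1/2)
          (fun t => γ i * caputoDeriv (A i x) (1/2)
            (fun s => u (Function.update x i s)) t) (x i))
        = ∑ i, γ i * deriv (fun s => u (Function.update x i s)) (x i) := by
  intro x hx
  have hxc : x ∈ closure Ω := subset_closure hx
  apply Finset.sum_congr rfl
  intro i _
  -- x i is interior to the segment
  have hseg := hAB i x hxc
  have hmem : x i ∈ Icc (A i x) (B i x) := by
    rw [← hseg]
    show Function.update x i (x i) ∈ closure Ω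
    rw [Function.update_eq_self]
    exact hxc
  have hioo : x i ∈ Ioo (A i x) (B i x) := by
    have hcont : Continuous (fun t : ℝ => Function.update x i t) :=
      continuous_const.update i continuous_id
    have hV : IsOpen ((fun t : ℝ => Function.update x i t) ⁻¹' Ω) := hΩo.preimage hcont
    have hxV : x i ∈ (fun t : ℝ => Function.update x i t) ⁻¹' Ω := by
      show Function.update x i (x i) ∈ Ω
      rw [Function.update_eq_self]; exact hx
    obtain ⟨ε, hε, hball⟩ := Metric.isOpen_iff.1 hV (x i) hxV
    have hsub : (fun t : ℝ => Function.update x i t) ⁻¹' Ω ⊆ Icc (A i x) (B i x) := by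
      intro t ht
      rw [← hseg]
      exact subset_closure ht
    have h1 : x i + ε/2 ∈ Icc (A i x) (B i x) := by
      apply hsub; apply hball
      rw [Metric.mem_ball, Real.dist_eq, show x i + ε/2 - x i = ε/2 by ring,
        abs_of_pos (by linarith)]
      linarith
    have h2 : x i - ε/2 ∈ Icc (A i x) (B i x) := by
      apply hsub; apply hball
      rw [Metric.mem_ball, Real.dist_eq, show x i - ε/2 - x i = -(ε/2) by ring,
        abs_neg, abs_of_pos (by linarith)]
      linarith
    constructor
    · have := h2.1; linarith
    · have := h1.2; linarith
  exact onedim (A i x) (B i x) (fun s => u (Function.update x i s))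
    (u' i x) (u'' i x) (γ i) (x i) hioo (hu1 i x hxc) (hu2 i x hxc).1 (hu2 i x hxc).2
end

section
/- Fractional Green-Riemann formula in 1D: for 0 < α < 1, u ∈ AC¹([a,b]) and v ∈ C¹([a,b]) with v(a) = v(b) = 0, ∫_a^b u(x) · ᶜD₋^α v(x) dx = ∫_a^b D₊^α u(x) · v(x) dx. -/
open MeasureTheory intervalIntegral Set

lemma II_rpow_sub (r : ℝ) (hr : -1 < r) (c d x : ℝ) :
    IntervalIntegrable (fun t => (t - x) ^ r) volume c d := by
  simpa using (intervalIntegrable_rpow' (a := c - x) (b := d - x) hr).comp_sub_right x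

lemma II_rpow_sub_left (r : ℝ) (hr : -1 < r) (c d x : ℝ) :
    IntervalIntegrable (fun t => (x - t) ^ r) volume c d := by
  have := (intervalIntegrable_rpow' (a := x - c) (b := x - d) hr).comp_sub_left x
  simpa using this

lemma II_abs_rpow (r : ℝ) (hr : -1 < r) (x c d : ℝ) :
    IntervalIntegrable (fun t => |t - x| ^ r) volume c d := by
  have base : ∀ p q : ℝ, IntervalIntegrable (fun t => |t| ^ r) volume p q := by
    have h0 : ∀ q : ℝ, IntervalIntegrable (fun t => |t| ^ r) volume 0 q := by
      intro q
      rcases le_total 0 q with hq | hq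
      · rw [intervalIntegrable_iff, uIoc_of_le hq]
        have h1 : IntegrableOn (fun t : ℝ => t ^ r) (Ioc 0 q) volume := by
          rw [← intervalIntegrable_iff_integrableOn_Ioc_of_le hq]
          exact intervalIntegrable_rpow' hr
        apply h1.congr_fun ?_ measurableSet_Ioc
        intro t ht; simp [abs_of_pos ht.1]
      · rw [intervalIntegrable_iff, uIoc_of_ge hq]
        have h1 : IntegrableOn (fun t : ℝ => (0 - t) ^ r) (Ioc q 0) volume := by
          rw [← intervalIntegrable_iff_integrableOn_Ioc_of_le hq]
          exact II_rpow_sub_left r hr q 0 0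
        apply h1.congr_fun ?_ measurableSet_Ioc
        intro t ht
        simp [abs_of_nonpos ht.2]
    intro p q
    exact ((h0 p).symm).trans (h0 q)
  simpa using (base (c - x) (d - x)).comp_sub_right x

lemma integral_sub_rpow {r : ℝ} (hr : -1 < r) (s t : ℝ) :
    ∫ x in s..t, (x - s) ^ r = (t - s) ^ (r + 1) / (r + 1) := by
  have h := intervalIntegral.integral_comp_sub_right (a := s) (b := t) (fun y => y ^ r) s
  rw [h, sub_self, integral_rpow (Or.inl hr), Real.zero_rpow (by linarith), sub_zero]

lemma integral_sub_rpow' {r : ℝ} (hr : -1 < r) (s t : ℝ) :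
    ∫ x in s..t, (t - x) ^ r = (t - s) ^ (r + 1) / (r + 1) := by
  have h := intervalIntegral.integral_comp_sub_left (a := s) (b := t) (fun y => y ^ r) t
  rw [h, sub_self, integral_rpow (Or.inl hr), Real.zero_rpow (by linarith), sub_zero]

lemma tri_swap {a b : ℝ} (hab : a ≤ b) (f : ℝ → ℝ → ℝ)
    (hf : Integrable (fun p : ℝ × ℝ => if p.1 < p.2 then f p.1 p.2 else 0)
      ((volume.restrict (Ioc a b)).prod (volume.restrict (Ioc a b)))) :
    ∫ x in a..b, (∫ τ in x..b, f x τ) = ∫ τ in a..b, (∫ x in a..τ, f x τ) := by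
  have step1 : ∫ x in a..b, (∫ τ in x..b, f x τ)
      = ∫ x in Ioc a b, (∫ τ in Ioc a b, (if x < τ then f x τ else 0)) := by
    rw [intervalIntegral.integral_of_le hab]
    apply setIntegral_congr_fun measurableSet_Ioc
    intro x hx
    show (∫ τ in x..b, f x τ) = ∫ τ in Ioc a b, (if x < τ then f x τ else 0)
    have hind : (fun τ => if x < τ then f x τ else 0) = Set.indicator (Ioi x) (fun τ => f x τ) := by
      funext τ; simp [Set.indicator_apply, mem_Ioi]
    rw [intervalIntegral.integral_of_le hx.2]
    rw [hind, MeasureTheory.setIntegral_indicator measurableSet_Ioi]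
    have hset : Ioc a b ∩ Ioi x = Ioc x b := by
      ext τ
      simp only [mem_inter_iff, mem_Ioc, mem_Ioi]
      constructor
      · rintro ⟨⟨h1, h2⟩, h3⟩; exact ⟨h3, h2⟩
      · rintro ⟨h1, h2⟩; exact ⟨⟨hx.1.trans h1, h2⟩, h1⟩
    rw [hset]
  have step3 : ∫ τ in Ioc a b, (∫ x in Ioc a b, (if x < τ then f x τ else 0))
      = ∫ τ in a..b, (∫ x in a..τ, f x τ) := by
    rw [intervalIntegral.integral_of_le hab]
    apply setIntegral_congr_fun measurableSet_Ioc
    intro τ hτ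
    show (∫ x in Ioc a b, (if x < τ then f x τ else 0)) = ∫ x in a..τ, f x τ
    have hind : (fun x => if x < τ then f x τ else 0) = Set.indicator (Iio τ) (fun x => f x τ) := by
      funext x; simp [Set.indicator_apply, mem_Iio]
    rw [hind, MeasureTheory.setIntegral_indicator measurableSet_Iio]
    have hset : Ioc a b ∩ Iio τ = Ioo a τ := by
      ext x
      simp only [mem_inter_iff, mem_Ioc, mem_Iio, mem_Ioo]
      constructor
      · rintro ⟨⟨h1, h2⟩, h3⟩; exact ⟨h1, h3⟩
      · rintro ⟨h1, h2⟩; exact ⟨⟨h1, (le_of_lt h2).trans hτ.2⟩, h2⟩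
    rw [hset, intervalIntegral.integral_of_le hτ.1.le]
    exact setIntegral_congr_set Ioo_ae_eq_Ioc
  rw [step1, ← step3]
  exact MeasureTheory.integral_integral_swap hf

lemma ae_ftc {g : ℝ → ℝ} (hg : Integrable g volume) (a : ℝ) :
    ∀ᵐ x : ℝ, HasDerivAt (fun t => ∫ s in a..t, g s) (g x) x := by
  filter_upwards [(IsUnifLocDoublingMeasure.vitaliFamily (volume : Measure ℝ) 1).ae_tendsto_average
    hg.locallyIntegrable] with x hx
  set F : ℝ → ℝ := fun t => ∫ s in a..t, g s with hFdef
  have hsub : ∀ p q : ℝ, F q - F p = ∫ s in p..q, g s := by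
    intro p q
    exact intervalIntegral.integral_interval_sub_left hg.intervalIntegrable hg.intervalIntegrable
  have havg : ∀ p q : ℝ, p < q → (⨍ s in Icc p q, g s) = (q - p)⁻¹ * ∫ s in p..q, g s := by
    intro p q hpq
    rw [setAverage_eq, Real.volume_real_Icc_of_le hpq.le, smul_eq_mul,
      setIntegral_congr_set Ioc_ae_eq_Icc.symm,
      ← intervalIntegral.integral_of_le hpq.le]
  have R : Filter.Tendsto (slope F x) (nhdsWithin x (Ioi x)) (nhds (g x)) := by
    apply Filter.Tendsto.congr' _ (hx.comp (Real.tendsto_Icc_vitaliFamily_right x))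
    filter_upwards [self_mem_nhdsWithin] with y hy
    have hy' : x < y := hy
    simp only [Function.comp_apply]
    rw [havg x y hy', slope_def_field, ← hsub x y, div_eq_inv_mul]
  have L : Filter.Tendsto (slope F x) (nhdsWithin x (Iio x)) (nhds (g x)) := by
    apply Filter.Tendsto.congr' _ (hx.comp (Real.tendsto_Icc_vitaliFamily_left x))
    filter_upwards [self_mem_nhdsWithin] with y hy
    have hy' : y < x := hy
    simp only [Function.comp_apply]
    rw [havg y x hy', slope_def_field, ← hsub y x, div_eq_inv_mul,
      ← neg_sub x y, ← neg_sub (F x) (F y), inv_neg, neg_mul_neg]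
  rw [hasDerivAt_iff_tendsto_slope, ← nhdsLT_sup_nhdsGT, Filter.tendsto_sup]
  exact ⟨L, R⟩




lemma kernel_bound {c1 c2 r : ℝ} (h12 : c1 ≤ c2) (hr : -1 < r) {x : ℝ}
    (hx : x ∈ Icc c1 c2) :
    (∫ y in Ioc c1 c2, |y - x| ^ r) ≤ 2 * (c2 - c1) ^ (r + 1) / (r + 1) := by
  have hr1 : 0 < r + 1 := by linarith
  have h1 : ∫ y in c1..x, |y - x| ^ r = (x - c1) ^ (r + 1) / (r + 1) := by
    rw [intervalIntegral.integral_congr (g := fun y => (x - y) ^ r) ?_, integral_sub_rpow' hr]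
    intro y hy
    rw [uIcc_of_le hx.1] at hy
    simp [abs_of_nonpos (by linarith [hy.2] : y - x ≤ 0), neg_sub]
  have h2 : ∫ y in x..c2, |y - x| ^ r = (c2 - x) ^ (r + 1) / (r + 1) := by
    rw [intervalIntegral.integral_congr (g := fun y => (y - x) ^ r) ?_, integral_sub_rpow hr]
    intro y hy
    rw [uIcc_of_le hx.2] at hy
    simp [abs_of_nonneg (by linarith [hy.1] : (0:ℝ) ≤ y - x)]
  have hsplit : (∫ y in Ioc c1 c2, |y - x| ^ r)
      = (∫ y in c1..x, |y - x| ^ r) + ∫ y in x..c2, |y - x| ^ r := by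
    rw [← intervalIntegral.integral_of_le h12,
      ← intervalIntegral.integral_add_adjacent_intervals (II_abs_rpow r hr x c1 x)
        (II_abs_rpow r hr x x c2)]
  have e1 : (x - c1) ^ (r + 1) ≤ (c2 - c1) ^ (r + 1) :=
    Real.rpow_le_rpow (by linarith [hx.1]) (by linarith [hx.2]) hr1.le
  have e2 : (c2 - x) ^ (r + 1) ≤ (c2 - c1) ^ (r + 1) :=
    Real.rpow_le_rpow (by linarith [hx.2]) (by linarith [hx.1]) hr1.le
  rw [hsplit, h1, h2, ← add_div]
  rw [div_le_div_iff_of_pos_right hr1]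
  linarith

lemma key_int {c1 c2 r Mψ : ℝ} (h12 : c1 ≤ c2) (hr : -1 < r)
    {φ ψ : ℝ → ℝ} (hφ : IntegrableOn φ (Ioc c1 c2))
    (hψm : AEStronglyMeasurable ψ (volume.restrict (Ioc c1 c2)))
    (hψb : ∀ y ∈ Ioc c1 c2, ‖ψ y‖ ≤ Mψ) :
    Integrable (fun p : ℝ × ℝ => φ p.1 * (|p.2 - p.1| ^ r * ψ p.2))
      ((volume.restrict (Ioc c1 c2)).prod (volume.restrict (Ioc c1 c2))) := by
  have hr1 : 0 < r + 1 := by linarith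
  set μ := volume.restrict (Ioc c1 c2) with hμ
  have hker_meas : Measurable fun p : ℝ × ℝ => |p.2 - p.1| ^ r := by fun_prop
  have h1f : AEStronglyMeasurable (fun p : ℝ × ℝ => φ p.1 * (|p.2 - p.1| ^ r * ψ p.2))
      (μ.prod μ) :=
    (hφ.aestronglyMeasurable.comp_fst).mul (hker_meas.aestronglyMeasurable.mul hψm.comp_snd)
  have hk : ∀ x : ℝ, Integrable (fun y => |y - x| ^ r) μ := fun x =>
    (intervalIntegrable_iff_integrableOn_Ioc_of_le h12).1 (II_abs_rpow r hr x c1 c2)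
  have main : ∀ x : ℝ, Integrable (fun y => |y - x| ^ r * ψ y) μ := by
    intro x
    apply Integrable.mono' ((hk x).mul_const Mψ)
      ((show Measurable fun y : ℝ => |y - x| ^ r by fun_prop).aestronglyMeasurable.mul hψm)
    filter_upwards [ae_restrict_mem measurableSet_Ioc] with y hy
    show ‖|y - x| ^ r * ψ y‖ ≤ |y - x| ^ r * Mψ
    rw [norm_mul, Real.norm_of_nonneg (Real.rpow_nonneg (abs_nonneg _) r)]
    exact mul_le_mul_of_nonneg_left (hψb y hy) (Real.rpow_nonneg (abs_nonneg _) r)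
  rw [MeasureTheory.integrable_prod_iff h1f]
  set C := 2 * (c2 - c1) ^ (r + 1) / (r + 1) with hC
  constructor
  · filter_upwards [ae_restrict_mem measurableSet_Ioc] with x _
    exact (main x).const_mul (φ x)
  · apply Integrable.mono' (hφ.norm.mul_const (Mψ * C)) ((h1f.norm).integral_prod_right')
    filter_upwards [ae_restrict_mem measurableSet_Ioc] with x hx
    have hMψ0 : 0 ≤ Mψ := le_trans (norm_nonneg (ψ x)) (hψb x hx)
    have hbnd : ∀ᵐ y ∂μ, ‖φ x * (|y - x| ^ r * ψ y)‖ ≤ ‖φ x‖ * (|y - x| ^ r * Mψ) := by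
      filter_upwards [ae_restrict_mem measurableSet_Ioc] with y hy
      rw [norm_mul, norm_mul, Real.norm_of_nonneg (Real.rpow_nonneg (abs_nonneg _) r)]
      exact mul_le_mul_of_nonneg_left
        (mul_le_mul_of_nonneg_left (hψb y hy) (Real.rpow_nonneg (abs_nonneg _) r))
        (norm_nonneg _)
    have step : (∫ y, ‖φ x * (|y - x| ^ r * ψ y)‖ ∂μ) ≤ ∫ y, ‖φ x‖ * (|y - x| ^ r * Mψ) ∂μ :=
      integral_mono_ae (((main x).const_mul (φ x)).norm)
        ((((hk x).mul_const Mψ)).const_mul ‖φ x‖) hbnd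
    rw [Real.norm_of_nonneg (integral_nonneg fun y => norm_nonneg _)]
    refine le_trans step ?_
    have expand : (∫ y, ‖φ x‖ * (|y - x| ^ r * Mψ) ∂μ)
        = ‖φ x‖ * Mψ * ∫ y, |y - x| ^ r ∂μ := by
      rw [MeasureTheory.integral_const_mul]
      rw [show (fun y => |y - x| ^ r * Mψ) = fun y => Mψ * |y - x| ^ r from by
        funext y; ring, MeasureTheory.integral_const_mul]
      ring
    rw [expand]
    have kb := kernel_bound h12 hr (Ioc_subset_Icc_self hx)
    calc ‖φ x‖ * Mψ * ∫ y, |y - x| ^ r ∂μ ≤ ‖φ x‖ * Mψ * C := by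
          apply mul_le_mul_of_nonneg_left kb (by positivity)
      _ = ‖φ x‖ * (Mψ * C) := by ring

/-- fractional Green-Riemann formula in 1D:
`∫ u ᶜD₋^α v = ∫ (D₊^α u) v` for `u ∈ AC¹([a,b])`, `v ∈ C¹₀([a,b])`. -/
theorem fractional_green_riemann_1d (a b α : ℝ) (hab : a < b)
    (hα0 : 0 < α) (hα1 : α < 1) (u u' v v' : ℝ → ℝ)
    (hu'int : IntervalIntegrable u' volume a b)
    (huAC : ∀ t ∈ Set.Icc a b, u t = u a + ∫ s in a..t, u' s)
    (hv : ∀ t ∈ Set.Icc a b, HasDerivAt v (v' t) t)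
    (hv' : ContinuousOn v' (Set.Icc a b))
    (hva : v a = 0) (hvb : v b = 0) :
    ∫ x in a..b, u x * caputoDerivR b α v x = ∫ x in a..b, rlDeriv a α u x * v x := by
  have hab' : a ≤ b := hab.le
  have hr : (-1 : ℝ) < -α := by linarith
  set c : ℝ := 1 / Real.Gamma (1 - α) with hc
  have hexp : (1:ℝ) - α - 1 = -α := by ring
  have hdv : ∀ τ ∈ Icc a b, deriv v τ = v' τ := fun τ hτ => (hv τ hτ).deriv
  -- basic integrability facts
  have hu'Icc : IntegrableOn u' (Icc a b) :=
    (intervalIntegrable_iff_integrableOn_Icc_of_le hab').1 hu'int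
  have hu'On : IntegrableOn u' (Ioc a b) := hu'Icc.mono_set Ioc_subset_Icc_self
  have hPcont : ∀ τ ∈ Icc a b, ContinuousOn (fun x => ∫ s in a..x, u' s) (Icc a τ) := by
    intro τ hτ
    have h1 : IntegrableOn u' (uIcc a τ) := by
      rw [uIcc_of_le hτ.1]
      exact hu'Icc.mono_set (Icc_subset_Icc le_rfl hτ.2)
    have := intervalIntegral.continuousOn_primitive_interval (f := u') (a := a) (b := τ)
      (μ := volume) h1
    rwa [uIcc_of_le hτ.1] at this
  have hucont : ContinuousOn u (Icc a b) := by
    have hP : ContinuousOn (fun t => u a + ∫ s in a..t, u' s) (Icc a b) :=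
      continuousOn_const.add (hPcont b ⟨hab', le_rfl⟩)
    exact hP.congr huAC
  have huint : IntegrableOn u (Ioc a b) :=
    (hucont.integrableOn_Icc).mono_set Ioc_subset_Icc_self
  obtain ⟨Mv, hMv⟩ : ∃ C, ∀ x ∈ Icc a b, ‖v' x‖ ≤ C :=
    isCompact_Icc.exists_bound_of_continuousOn hv'
  have hv'aesm : AEStronglyMeasurable v' (volume.restrict (Ioc a b)) :=
    (hv'.mono Ioc_subset_Icc_self).aestronglyMeasurable measurableSet_Ioc
  -- generic converter to triangle-indicator form
  have mk_tri : ∀ {c2 : ℝ} (F G : ℝ × ℝ → ℝ),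
      Integrable F ((volume.restrict (Ioc a c2)).prod (volume.restrict (Ioc a c2))) →
      (∀ p : ℝ × ℝ, p.1 < p.2 → F p = G p) →
      Integrable (fun p : ℝ × ℝ => if p.1 < p.2 then G p else 0)
        ((volume.restrict (Ioc a c2)).prod (volume.restrict (Ioc a c2))) := by
    intro c2 F G hF hFG
    have hind := hF.indicator (measurableSet_lt measurable_fst measurable_snd)
    apply hind.congr
    apply Filter.Eventually.of_forall
    intro p
    by_cases h : p.1 < p.2
    · simp [Set.indicator_apply, Set.mem_setOf_eq, h, hFG p h]
    · simp [Set.indicator_apply, Set.mem_setOf_eq, h]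
  -- W and g
  set W : ℝ → ℝ := fun x => ∫ s in a..x, (x - s) ^ (-α) * u' s with hWdef
  set g : ℝ → ℝ := fun x => (x - a) ^ (-α) * u a + W x with hgdef
  -- triangle integrability for the kernel with u'
  have triW : ∀ τ, a ≤ τ → τ ≤ b →
      Integrable (fun p : ℝ × ℝ => if p.1 < p.2 then (p.2 - p.1) ^ (-α) * u' p.1 else 0)
        ((volume.restrict (Ioc a τ)).prod (volume.restrict (Ioc a τ))) := by
    intro τ haτ hτb
    have base := key_int (Mψ := 1) haτ hr (hu'On.mono_set (Ioc_subset_Ioc_right hτb))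
      (aestronglyMeasurable_const (b := (1:ℝ))) (fun y _ => by norm_num)
    apply mk_tri _ _ base
    intro p hp
    rw [abs_of_pos (sub_pos.2 hp)]
    ring
  have triTa : ∀ τ, a ≤ τ → τ ≤ b →
      Integrable (fun p : ℝ × ℝ => if p.1 < p.2 then (τ - p.2) ^ (-α) * u' p.1 else 0)
        ((volume.restrict (Ioc a τ)).prod (volume.restrict (Ioc a τ))) := by
    intro τ haτ hτb
    have base := (hu'On.mono_set (Ioc_subset_Ioc_right hτb)).mul_prod
      ((intervalIntegrable_iff_integrableOn_Ioc_of_le haτ).1 (II_rpow_sub_left (-α) hr a τ τ))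
    apply mk_tri _ _ base
    intro p _
    ring
  -- integrability of W on (a,b]
  have hWint : IntegrableOn W (Ioc a b) := by
    have marg := (triW b hab' le_rfl).integral_prod_right
    apply marg.congr
    filter_upwards [ae_restrict_mem measurableSet_Ioc] with x hx
    show (∫ s in Ioc a b, (if s < x then (x - s) ^ (-α) * u' s else 0)) = W x
    rw [show (fun s => if s < x then (x - s) ^ (-α) * u' s else 0)
        = Set.indicator (Iio x) (fun s => (x - s) ^ (-α) * u' s) from
      funext fun s => by simp [Set.indicator_apply, mem_Iio]]
    rw [MeasureTheory.setIntegral_indicator measurableSet_Iio]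
    have hset : Ioc a b ∩ Iio x = Ioo a x := by
      ext s
      simp only [mem_inter_iff, mem_Ioc, mem_Iio, mem_Ioo]
      constructor
      · rintro ⟨⟨h1, h2⟩, h3⟩; exact ⟨h1, h3⟩
      · rintro ⟨h1, h2⟩; exact ⟨⟨h1, h2.le.trans hx.2⟩, h2⟩
    rw [hset, setIntegral_congr_set Ioo_ae_eq_Ioc, ← intervalIntegral.integral_of_le hx.1.le]
  have hgint : IntegrableOn g (Ioc a b) := by
    have h1 : IntegrableOn (fun x => (x - a) ^ (-α) * u a) (Ioc a b) :=
      (intervalIntegrable_iff_integrableOn_Ioc_of_le hab').1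
        ((II_rpow_sub (-α) hr a b a).mul_const (u a))
    exact h1.add hWint
  -- Claim A
  have claimA : ∀ τ ∈ Icc a b,
      (∫ x in a..τ, (τ - x) ^ (-α) * u x) = ∫ x in a..τ, g x := by
    intro τ hτ
    have haτ : a ≤ τ := hτ.1
    have i1 : IntervalIntegrable (fun x => (τ - x) ^ (-α) * u a) volume a τ :=
      (II_rpow_sub_left (-α) hr a τ τ).mul_const (u a)
    have i2 : IntervalIntegrable (fun x => (τ - x) ^ (-α) * (∫ s in a..x, u' s)) volume a τ := by
      apply (II_rpow_sub_left (-α) hr a τ τ).mul_continuousOn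
      rw [uIcc_of_le haτ]
      exact hPcont τ hτ
    have e1 : (∫ x in a..τ, (τ - x) ^ (-α) * u x)
        = (∫ x in a..τ, (τ - x) ^ (-α) * u a)
          + ∫ x in a..τ, (τ - x) ^ (-α) * (∫ s in a..x, u' s) := by
      rw [← intervalIntegral.integral_add i1 i2]
      apply intervalIntegral.integral_congr
      intro x hx
      rw [uIcc_of_le haτ] at hx
      show (τ - x) ^ (-α) * u x = _
      rw [huAC x ⟨hx.1, hx.2.trans hτ.2⟩]
      ring
    have e1a : (∫ x in a..τ, (τ - x) ^ (-α) * u a)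
        = (τ - a) ^ (-α + 1) / (-α + 1) * u a := by
      rw [intervalIntegral.integral_mul_const, integral_sub_rpow' hr]
    have e1b : (∫ x in a..τ, (τ - x) ^ (-α) * (∫ s in a..x, u' s))
        = ∫ s in a..τ, (τ - s) ^ (-α + 1) / (-α + 1) * u' s := by
      have swap := tri_swap haτ (fun s x => (τ - x) ^ (-α) * u' s) (triTa τ haτ hτ.2)
      calc (∫ x in a..τ, (τ - x) ^ (-α) * (∫ s in a..x, u' s))
          = ∫ x in a..τ, (∫ s in a..x, (τ - x) ^ (-α) * u' s) := by
            apply intervalIntegral.integral_congr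
            intro x hx
            show (τ - x) ^ (-α) * (∫ s in a..x, u' s) = ∫ s in a..x, (τ - x) ^ (-α) * u' s
            exact (intervalIntegral.integral_const_mul _ _).symm
        _ = ∫ s in a..τ, (∫ x in s..τ, (τ - x) ^ (-α) * u' s) := swap.symm
        _ = ∫ s in a..τ, (τ - s) ^ (-α + 1) / (-α + 1) * u' s := by
            apply intervalIntegral.integral_congr
            intro s hs
            rw [uIcc_of_le haτ] at hs
            show (∫ x in s..τ, (τ - x) ^ (-α) * u' s) = (τ - s) ^ (-α + 1) / (-α + 1) * u' s
            rw [intervalIntegral.integral_mul_const, integral_sub_rpow' hr]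
    have i3 : IntervalIntegrable (fun x => (x - a) ^ (-α) * u a) volume a τ :=
      (II_rpow_sub (-α) hr a τ a).mul_const (u a)
    have i4 : IntervalIntegrable W volume a τ :=
      (intervalIntegrable_iff_integrableOn_Ioc_of_le haτ).2
        (hWint.mono_set (Ioc_subset_Ioc_right hτ.2))
    have e2 : (∫ x in a..τ, g x)
        = (∫ x in a..τ, (x - a) ^ (-α) * u a) + ∫ x in a..τ, W x := by
      simp only [hgdef]
      exact intervalIntegral.integral_add i3 i4
    have e2a : (∫ x in a..τ, (x - a) ^ (-α) * u a)
        = (τ - a) ^ (-α + 1) / (-α + 1) * u a := by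
      rw [intervalIntegral.integral_mul_const, integral_sub_rpow hr]
    have e2b : (∫ x in a..τ, W x)
        = ∫ s in a..τ, (τ - s) ^ (-α + 1) / (-α + 1) * u' s := by
      have swap := tri_swap haτ (fun s x => (x - s) ^ (-α) * u' s) (triW τ haτ hτ.2)
      calc (∫ x in a..τ, W x)
          = ∫ x in a..τ, (∫ s in a..x, (x - s) ^ (-α) * u' s) := by simp only [hWdef]
        _ = ∫ s in a..τ, (∫ x in s..τ, (x - s) ^ (-α) * u' s) := swap.symm
        _ = ∫ s in a..τ, (τ - s) ^ (-α + 1) / (-α + 1) * u' s := by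
            apply intervalIntegral.integral_congr
            intro s hs
            rw [uIcc_of_le haτ] at hs
            show (∫ x in s..τ, (x - s) ^ (-α) * u' s) = (τ - s) ^ (-α + 1) / (-α + 1) * u' s
            rw [intervalIntegral.integral_mul_const, integral_sub_rpow hr]
    rw [e1, e1a, e1b, e2, e2a, e2b]
  -- FTC for v
  have hFTCv : ∀ x ∈ Icc a b, (∫ τ in x..b, v' τ) = v b - v x := by
    intro x hx
    apply intervalIntegral.integral_eq_sub_of_hasDerivAt
    · intro t ht
      rw [uIcc_of_le hx.2] at ht
      exact hv t ⟨hx.1.trans ht.1, ht.2⟩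
    · apply ContinuousOn.intervalIntegrable
      apply hv'.mono
      rw [uIcc_of_le hx.2]
      exact Icc_subset_Icc hx.1 le_rfl
  -- step 1
  have step1 : (∫ x in a..b, u x * caputoDerivR b α v x)
      = -c * ∫ x in a..b, (∫ τ in x..b, u x * (|τ - x| ^ (-α) * v' τ)) := by
    rw [← intervalIntegral.integral_const_mul]
    apply intervalIntegral.integral_congr
    intro x hx
    rw [uIcc_of_le hab'] at hx
    show u x * caputoDerivR b α v x = -c * ∫ τ in x..b, u x * (|τ - x| ^ (-α) * v' τ)
    have einner : (∫ τ in x..b, (τ - x) ^ (1 - α - 1) * deriv v τ)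
        = ∫ τ in x..b, |τ - x| ^ (-α) * v' τ := by
      apply intervalIntegral.integral_congr
      intro τ hτ
      rw [uIcc_of_le hx.2] at hτ
      show (τ - x) ^ (1 - α - 1) * deriv v τ = |τ - x| ^ (-α) * v' τ
      rw [hexp, hdv τ ⟨hx.1.trans hτ.1, hτ.2⟩,
        abs_of_nonneg (by linarith [hτ.1] : (0:ℝ) ≤ τ - x)]
    simp only [caputoDerivR, fracIntR]
    rw [einner, intervalIntegral.integral_const_mul]
    ring
  -- triangle integrability for step 2
  have triInt1 : Integrable
      (fun p : ℝ × ℝ => if p.1 < p.2 then u p.1 * (|p.2 - p.1| ^ (-α) * v' p.2) else 0)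
      ((volume.restrict (Ioc a b)).prod (volume.restrict (Ioc a b))) := by
    apply mk_tri _ _ (key_int hab' hr huint hv'aesm
      (fun y hy => hMv y (Ioc_subset_Icc_self hy)))
    intro p _
    rfl
  have step2 := tri_swap hab' (fun x τ => u x * (|τ - x| ^ (-α) * v' τ)) triInt1
  -- step 2b
  have step2b : (∫ τ in a..b, (∫ x in a..τ, u x * (|τ - x| ^ (-α) * v' τ)))
      = ∫ τ in a..b, v' τ * (∫ x in a..τ, g x) := by
    apply intervalIntegral.integral_congr
    intro τ hτ
    rw [uIcc_of_le hab'] at hτ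
    show (∫ x in a..τ, u x * (|τ - x| ^ (-α) * v' τ)) = v' τ * ∫ x in a..τ, g x
    rw [← claimA τ hτ, ← intervalIntegral.integral_const_mul]
    apply intervalIntegral.integral_congr
    intro x hx
    rw [uIcc_of_le hτ.1] at hx
    show u x * (|τ - x| ^ (-α) * v' τ) = v' τ * ((τ - x) ^ (-α) * u x)
    rw [abs_of_nonneg (by linarith [hx.2] : (0:ℝ) ≤ τ - x)]
    ring
  -- step 3
  have step3 : (∫ τ in a..b, v' τ * (∫ x in a..τ, g x))
      = ∫ τ in a..b, (∫ x in a..τ, g x * v' τ) := by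
    apply intervalIntegral.integral_congr
    intro τ hτ
    show v' τ * (∫ x in a..τ, g x) = ∫ x in a..τ, g x * v' τ
    rw [intervalIntegral.integral_mul_const]
    ring
  -- step 4
  have triInt3 : Integrable
      (fun p : ℝ × ℝ => if p.1 < p.2 then g p.1 * v' p.2 else 0)
      ((volume.restrict (Ioc a b)).prod (volume.restrict (Ioc a b))) := by
    apply mk_tri _ _ (key_int (r := 0) hab' (by norm_num) hgint hv'aesm
      (fun y hy => hMv y (Ioc_subset_Icc_self hy)))
    intro p _
    simp [Real.rpow_zero]
  have step4 := (tri_swap hab' (fun x τ => g x * v' τ) triInt3).symm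
  -- step 5
  have step5 : (∫ x in a..b, (∫ τ in x..b, g x * v' τ))
      = ∫ x in a..b, -(g x * v x) := by
    apply intervalIntegral.integral_congr
    intro x hx
    rw [uIcc_of_le hab'] at hx
    show (∫ τ in x..b, g x * v' τ) = -(g x * v x)
    rw [intervalIntegral.integral_const_mul, hFTCv x hx, hvb]
    ring
  -- Claim C : the right-hand side
  set gh : ℝ → ℝ := Set.indicator (Ioo a b) (fun x => c * g x) with hghdef
  have hghint : Integrable gh volume := by
    rw [hghdef, integrable_indicator_iff measurableSet_Ioo]
    exact (hgint.mono_set Ioo_subset_Ioc_self).const_mul c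
  have hFder := ae_ftc hghint a
  have hbne : ∀ᵐ x : ℝ, x ≠ b := by
    rw [ae_iff]
    have : {x : ℝ | ¬x ≠ b} = {b} := by ext x; simp
    rw [this]
    exact measure_singleton b
  have claimC : (∫ x in a..b, rlDeriv a α u x * v x)
      = ∫ x in a..b, c * (g x * v x) := by
    apply intervalIntegral.integral_congr_ae
    filter_upwards [hFder, hbne] with x hdx hxb hmem
    rw [uIoc_of_le hab'] at hmem
    have hxO : x ∈ Ioo a b := ⟨hmem.1, lt_of_le_of_ne hmem.2 hxb⟩
    have heq : fracInt a (1 - α) u =ᶠ[nhds x] (fun t => ∫ s in a..t, gh s) := by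
      filter_upwards [isOpen_Ioo.mem_nhds hxO] with t ht
      show fracInt a (1 - α) u t = ∫ s in a..t, gh s
      simp only [fracInt, hexp]
      rw [claimA t ⟨ht.1.le, ht.2.le⟩, ← intervalIntegral.integral_const_mul]
      apply intervalIntegral.integral_congr
      intro s hs
      rw [uIcc_of_le ht.1.le] at hs
      show c * g s = gh s
      by_cases hsa : s = a
      · rw [hsa, hghdef, Set.indicator_of_notMem (by simp : a ∉ Ioo a b)]
        simp [hgdef, hWdef, Real.zero_rpow (neg_ne_zero.2 (ne_of_gt hα0))]
      · have hsIoo : s ∈ Ioo a b :=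
          ⟨lt_of_le_of_ne hs.1 (Ne.symm hsa), lt_of_le_of_lt hs.2 ht.2⟩
        rw [hghdef, Set.indicator_of_mem hsIoo]
    have hder_eq : rlDeriv a α u x = gh x := by
      have h1 : deriv (fracInt a (1 - α) u) x = deriv (fun t => ∫ s in a..t, gh s) x :=
        Filter.EventuallyEq.deriv_eq heq
      rw [rlDeriv, h1, hdx.deriv]
    rw [hder_eq, hghdef, Set.indicator_of_mem hxO]
    ring
  -- final assembly
  rw [step1, step2, step2b, step3, step4, step5, intervalIntegral.integral_neg, claimC,
    intervalIntegral.integral_const_mul]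
  ring
end
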